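/- Let F : A → B be a pointed functor between pointed groupoids, let F(F) be its mapping path groupoid (objects: triples (b, a, β) with β : b → F(a); morphisms (b, a, β) → (b′, a′, β′): pairs (u : b → b′, f : a → a′) with β ≫ F(f) = u ≫ β′; basepoint (*_B, *_A, id)), and let F′ : F(F) → B be the projection (b, a, β) ↦ b. Then the strict kernel Ker(F′) is isomorphic, as a pointed groupoid, to the strong homotopy kernel K(F): the functor sending an object (*_B, a, β : *_B → F(a)) of Ker(F′) to (a, β⁻¹) and a morphism (id, f) to f is an isomorphism of pointed groupoids. -/

import Mathlib

open CategoryTheory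

universe w v₁ v₂ v₃ v₄ u₁ u₂ u₃ u₄

namespace Snail

variable {A : Type u₁} [Groupoid.{v₁} A] {B : Type u₂} [Groupoid.{v₂} B]

/-- The set of connected components (isomorphism classes of objects) of a groupoid. -/
def Pi0 (A : Type u₁) [Groupoid.{v₁} A] : Type u₁ :=
  Quotient (CategoryTheory.isIsomorphicSetoid A)

/-- The connected component of an object. -/
def pi0 (a : A) : Pi0 A := Quotient.mk (CategoryTheory.isIsomorphicSetoid A) a

/-- The map induced on connected components by a functor; for pointed functors
between pointed groupoids this is the induced pointed map `π₀(F)`. -/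
def pi0Map (F : A ⥤ B) : Pi0 A → Pi0 B :=
  Quotient.map F.obj fun _ _ h => Nonempty.map (fun i => F.mapIso i) h

/-- The group homomorphism `π₁(F) : Aut (*_A) →* Aut (*_B)` induced by a pointed
functor `F` (with `F.obj pA = pB`). -/
def pi1Map (F : A ⥤ B) {pA : A} {pB : B} (h : F.obj pA = pB) : Aut pA →* Aut pB :=
  (Aut.autMulEquivOfIso (eqToIso h)).toMonoidHom.comp (F.mapAut pA)

/-- The strong homotopy kernel `K(F)` of a functor `F : A ⥤ B` with respect to the
basepoint `pB` of `B` : objects are pairs `(a, β : F a ⟶ pB)`. -/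
structure HKer (F : A ⥤ B) (pB : B) : Type (max u₁ v₂) where
  pt : A
  arr : F.obj pt ⟶ pB

/-- Morphisms `(a, β) ⟶ (a', β')` in `K(F)` are morphisms `f : a ⟶ a'` of `A` with
`F.map f ≫ β' = β`. -/
instance hkerGroupoid (F : A ⥤ B) (pB : B) : Groupoid (HKer F pB) where
  Hom x y := { f : x.pt ⟶ y.pt // F.map f ≫ y.arr = x.arr }
  id x := ⟨𝟙 x.pt, by simp⟩
  comp {x y z} f g := ⟨f.1 ≫ g.1, by rw [F.map_comp, Category.assoc, g.2, f.2]⟩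
  id_comp f := Subtype.ext (Category.id_comp f.1)
  comp_id f := Subtype.ext (Category.comp_id f.1)
  assoc f g h := Subtype.ext (Category.assoc f.1 g.1 h.1)
  inv {x y} f := ⟨Groupoid.inv f.1, by
    obtain ⟨g, h⟩ := f
    dsimp only
    rw [← h, ← Category.assoc, ← F.map_comp, Groupoid.inv_comp, F.map_id, Category.id_comp]⟩
  inv_comp f := Subtype.ext (Groupoid.inv_comp f.1)
  comp_inv f := Subtype.ext (Groupoid.comp_inv f.1)

/-- The projection functor `P : K(F) ⥤ A`, `(a, β) ↦ a`, `f ↦ f`. -/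
def hkerProj (F : A ⥤ B) (pB : B) : HKer F pB ⥤ A where
  obj x := x.pt
  map f := f.1
  map_id _ := rfl
  map_comp _ _ := rfl

/-- The strict kernel `Ker(F)` of a functor `F : A ⥤ B` with respect to the basepoint
`pB` : objects are the objects `a` of `A` with `F a = pB`. -/
structure SKer (F : A ⥤ B) (pB : B) : Type (max u₁ u₂) where
  pt : A
  base : F.obj pt = pB

/-- Morphisms of the strict kernel are the morphisms `f` of `A` with `F.map f`
equal to the identity of the basepoint (modulo the object identifications). -/
instance skerGroupoid (F : A ⥤ B) (pB : B) : Groupoid (SKer F pB) where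
  Hom x y := { f : x.pt ⟶ y.pt // F.map f ≫ eqToHom y.base = eqToHom x.base }
  id x := ⟨𝟙 x.pt, by simp⟩
  comp {x y z} f g := ⟨f.1 ≫ g.1, by rw [F.map_comp, Category.assoc, g.2, f.2]⟩
  id_comp f := Subtype.ext (Category.id_comp f.1)
  comp_id f := Subtype.ext (Category.comp_id f.1)
  assoc f g h := Subtype.ext (Category.assoc f.1 g.1 h.1)
  inv {x y} f := ⟨Groupoid.inv f.1, by
    obtain ⟨g, h⟩ := f
    dsimp only
    rw [← h, ← Category.assoc, ← F.map_comp, Groupoid.inv_comp, F.map_id, Category.id_comp]⟩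
  inv_comp f := Subtype.ext (Groupoid.inv_comp f.1)
  comp_inv f := Subtype.ext (Groupoid.comp_inv f.1)

/-- The inclusion functor `Ker(F) ⥤ A`. -/
def skerIncl (F : A ⥤ B) (pB : B) : SKer F pB ⥤ A where
  obj x := x.pt
  map f := f.1
  map_id _ := rfl
  map_comp _ _ := rfl

/-- The mapping path groupoid `F(F)` of a functor `F : A ⥤ B` : objects are triples
`(b, a, β : b ⟶ F a)`. -/
structure MPath (F : A ⥤ B) : Type (max u₁ u₂ v₂) where
  base : B
  pt : A
  arr : base ⟶ F.obj pt

/-- Morphisms `(b, a, β) ⟶ (b', a', β')` in `F(F)` are pairs `(u : b ⟶ b', f : a ⟶ a')`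
with `β ≫ F.map f = u ≫ β'`. -/
instance mpathGroupoid (F : A ⥤ B) : Groupoid (MPath F) where
  Hom x y := { p : (x.base ⟶ y.base) × (x.pt ⟶ y.pt) // x.arr ≫ F.map p.2 = p.1 ≫ y.arr }
  id x := ⟨(𝟙 x.base, 𝟙 x.pt), by simp⟩
  comp {x y z} f g := ⟨(f.1.1 ≫ g.1.1, f.1.2 ≫ g.1.2), by
    obtain ⟨⟨u, a⟩, hf⟩ := f
    obtain ⟨⟨v, b⟩, hg⟩ := g
    dsimp only at *
    rw [F.map_comp, ← Category.assoc, hf, Category.assoc, hg, ← Category.assoc]⟩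
  id_comp f := Subtype.ext (Prod.ext (Category.id_comp _) (Category.id_comp _))
  comp_id f := Subtype.ext (Prod.ext (Category.comp_id _) (Category.comp_id _))
  assoc f g h := Subtype.ext (Prod.ext (Category.assoc _ _ _) (Category.assoc _ _ _))
  inv {x y} f := ⟨(Groupoid.inv f.1.1, Groupoid.inv f.1.2), by
    obtain ⟨⟨u, g⟩, h⟩ := f
    dsimp only at *
    rw [Groupoid.inv_eq_inv, Groupoid.inv_eq_inv, F.map_inv, IsIso.comp_inv_eq,
      Category.assoc, h, IsIso.inv_hom_id_assoc]⟩
  inv_comp f := Subtype.ext (Prod.ext (Groupoid.inv_comp _) (Groupoid.inv_comp _))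
  comp_inv f := Subtype.ext (Prod.ext (Groupoid.comp_inv _) (Groupoid.comp_inv _))

/-- The projection `F' : F(F) ⥤ B`, `(b, a, β) ↦ b`. -/
def mpathToB (F : A ⥤ B) : MPath F ⥤ B where
  obj x := x.base
  map f := f.1.1
  map_id _ := rfl
  map_comp _ _ := rfl

/-- The projection `E : F(F) ⥤ A`, `(b, a, β) ↦ a`. -/
def mpathToA (F : A ⥤ B) : MPath F ⥤ A where
  obj x := x.pt
  map f := f.1.2
  map_id _ := rfl
  map_comp _ _ := rfl

/-- A functor between groupoids is a fibration if every morphism starting at an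
object in the image can be lifted. -/
def IsFibration {E : Type u₃} [Groupoid.{v₃} E] {B : Type u₂} [Groupoid.{v₂} B]
    (P : E ⥤ B) : Prop :=
  ∀ (e : E) (b : B) (g : P.obj e ⟶ b),
    ∃ (e' : E) (f : e ⟶ e') (h : P.obj e' = b), P.map f ≫ eqToHom h = g


/-- The canonical functor from the strict kernel of the mapping-path projection
`F' : F(F) ⥤ B` to the strong homotopy kernel `K(F)` : it sends an object
`(*_B, a, β : *_B ⟶ F a)` to `(a, β⁻¹)` and a morphism `(id, f)` to `f`. -/
def mpathKerToHKer (F : A ⥤ B) (pB : B) : SKer (mpathToB F) pB ⥤ HKer F pB where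
  obj x := ⟨x.pt.pt, Groupoid.inv x.pt.arr ≫ eqToHom x.base⟩
  map {x y} m := ⟨m.1.1.2, by
    obtain ⟨⟨⟨u, f⟩, hcomm⟩, hbase⟩ := m
    dsimp only [mpathToB] at hbase ⊢
    dsimp only at hcomm
    simp only [Groupoid.inv_eq_inv]
    have key : x.pt.arr ≫ F.map f ≫ inv y.pt.arr = u := by
      rw [← Category.assoc, hcomm, Category.assoc, IsIso.hom_inv_id, Category.comp_id]
    calc F.map f ≫ inv y.pt.arr ≫ eqToHom y.base
        = inv x.pt.arr ≫ (x.pt.arr ≫ F.map f ≫ inv y.pt.arr) ≫ eqToHom y.base := by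
          simp
      _ = inv x.pt.arr ≫ u ≫ eqToHom y.base := by rw [key]
      _ = inv x.pt.arr ≫ eqToHom x.base := by rw [hbase]⟩
  map_id _ := rfl
  map_comp _ _ := rfl

/-- For a pointed functor `F : A ⥤ B`, the strict kernel of the mapping-path
projection `F' : F(F) ⥤ B` is isomorphic, as a pointed groupoid, to the strong
homotopy kernel `K(F)` : the canonical functor preserves basepoints and is
bijective on objects and on morphisms. -/
theorem mpathKer_iso_hker {A : Type u₁} [Groupoid.{v₁} A] {B : Type u₂}
    [Groupoid.{v₂} B] (F : A ⥤ B) (pA : A) (pB : B) (hF : F.obj pA = pB) :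
    (mpathKerToHKer F pB).obj ⟨⟨pB, pA, eqToHom hF.symm⟩, rfl⟩ =
      (⟨pA, eqToHom hF⟩ : HKer F pB) ∧
    Function.Bijective (mpathKerToHKer F pB).obj ∧
    (∀ x y : SKer (mpathToB F) pB,
      Function.Bijective fun m : x ⟶ y => (mpathKerToHKer F pB).map m) := by
  refine ⟨?_, ?_, ?_⟩
  · simp only [mpathKerToHKer, eqToHom_refl, Category.comp_id]
    congr 1
    simp [Groupoid.inv_eq_inv]
    exact eqToHom_trans _ _
  · constructor
    · rintro ⟨⟨b, a, β⟩, hb⟩ ⟨⟨b', a', β'⟩, hb'⟩ h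
      dsimp only [mpathToB] at hb hb'
      subst hb; subst hb'
      simp only [mpathKerToHKer, HKer.mk.injEq, eqToHom_refl, Category.comp_id] at h
      obtain ⟨rfl, h2⟩ := h
      have : β = β' := by
        have := congrArg Groupoid.inv (eq_of_heq h2)
        simpa [Groupoid.inv_eq_inv] using this
      subst this; rfl
    · rintro ⟨a, β⟩
      refine ⟨⟨⟨pB, a, Groupoid.inv β⟩, rfl⟩, ?_⟩
      simp only [mpathKerToHKer, eqToHom_refl, Category.comp_id]
      congr 1
      simp [Groupoid.inv_eq_inv]
      exact Category.comp_id β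
  · intro x y
    constructor
    · rintro ⟨⟨⟨u, f⟩, hc⟩, hb⟩ ⟨⟨⟨u', f'⟩, hc'⟩, hb'⟩ h
      simp only [mpathKerToHKer, Subtype.mk.injEq] at h
      dsimp only [mpathToB] at hb hb'
      have hu : u = u' := by
        have h1 : u = eqToHom x.base ≫ eqToHom y.base.symm := by exact (comp_eqToHom_iff _ _ _).1 hb
        have h2 : u' = eqToHom x.base ≫ eqToHom y.base.symm := by exact (comp_eqToHom_iff _ _ _).1 hb'
        rw [h1, h2]
      have hf : f = f' := congrArg Subtype.val h
      subst hf; subst hu; rfl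
    · rintro ⟨g, hg⟩
      dsimp only [mpathKerToHKer] at hg
      simp only [Groupoid.inv_eq_inv] at hg
      refine ⟨⟨⟨(eqToHom x.base ≫ eqToHom y.base.symm, g), ?_⟩, ?_⟩, rfl⟩
      · dsimp only
        have h1 : F.map g =
            (inv x.pt.arr ≫ eqToHom x.base) ≫ inv (inv y.pt.arr ≫ eqToHom y.base) := by
          rw [← hg]; simp; rfl
        refine (congrArg (x.pt.arr ≫ ·) h1).trans ?_; simp
        exact congrArg (eqToHom _ ≫ · ≫ y.pt.arr) (inv_eqToHom _)
      · dsimp only [mpathToB]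
        simp
        exact (eqToHom_trans_assoc _ _ _).trans (eqToHom_trans _ _)

end Snail
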